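/- Let p and q be probability densities with respect to a σ-finite measure μ, and define I^s(p‖q) := −log ∫ p^s q^{1−s} dμ for 0 < s < 1. Then for every s ∈ (0,1), 2·min{s, 1−s}·I^{1/2}(p‖q) ≤ I^s(p‖q) ≤ 2·max{s, 1−s}·I^{1/2}(p‖q). -/

import Mathlib

open MeasureTheory Set ENNReal

/-- `-log x`, with the convention `-log 0 = ∞`, as a map `ℝ≥0∞ → ℝ≥0∞`. -/
noncomputable def negLog (x : ℝ≥0∞) : ℝ≥0∞ :=
  if x = 0 then ⊤ else ENNReal.ofReal (-Real.log x.toReal)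

/-- The relative Rényi entropy `I^s(p‖q) = -log ∫ p^s q^(1-s) dμ` of two densities
`p, q` with respect to `μ`. -/
noncomputable def renyi {Ω : Type*} [MeasurableSpace Ω] (μ : Measure Ω)
    (p q : Ω → ℝ≥0∞) (s : ℝ) : ℝ≥0∞ :=
  negLog (∫⁻ ω, p ω ^ s * q ω ^ (1 - s) ∂μ)

lemma negLog_antitone : Antitone negLog := by
  intro x y hxy
  unfold negLog
  rcases eq_or_ne x 0 with rfl | hx
  · simp
  have hy : y ≠ 0 := fun h => hx (le_antisymm (h ▸ hxy) (zero_le))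
  rw [if_neg hx, if_neg hy]
  rcases eq_or_ne y ⊤ with rfl | hytop
  · simp
  have hxtop : x ≠ ⊤ := fun h => hytop (top_le_iff.mp (h ▸ hxy))
  apply ENNReal.ofReal_le_ofReal
  have h0 : 0 < x.toReal := ENNReal.toReal_pos hx hxtop
  have := Real.log_le_log h0 (ENNReal.toReal_le_toReal hxtop hytop |>.mpr hxy)
  linarith

lemma negLog_rpow (x : ℝ≥0∞) (hx : x ≠ ⊤) {c : ℝ} (hc : 0 < c) :
    negLog (x ^ c) = ENNReal.ofReal c * negLog x := by
  unfold negLog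
  rcases eq_or_ne x 0 with rfl | hx0
  · rw [ENNReal.zero_rpow_of_pos hc]
    simp [ENNReal.mul_top (ENNReal.ofReal_pos.mpr hc).ne']
  have hxc : x ^ c ≠ 0 := by
    simp [ENNReal.rpow_eq_zero_iff, hx0, hx, hc, hc.not_gt, not_lt.mpr hc.le]
  rw [if_neg hxc, if_neg hx0, ← ENNReal.toReal_rpow,
    Real.log_rpow (ENNReal.toReal_pos hx0 hx), ← ENNReal.ofReal_mul hc.le]
  ring_nf

/-- Hölder interpolation. -/
lemma hold {Ω : Type*} [MeasurableSpace Ω] (μ : Measure Ω)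
    (f g : Ω → ℝ≥0∞) (hf : Measurable f) (hg : Measurable g)
    {t : ℝ} (ht : 0 < t) (ht1 : t < 1) :
    ∫⁻ ω, f ω ^ t * g ω ^ (1 - t) ∂μ ≤ (∫⁻ ω, f ω ∂μ) ^ t * (∫⁻ ω, g ω ∂μ) ^ (1 - t) := by
  have hconj : (1 / t).HolderConjugate (1 / (1 - t)) := by
    constructor
    · rw [one_div, one_div, inv_inv, inv_inv, inv_one]; ring
    · positivity
    · exact div_pos one_pos (by linarith)
  have h := ENNReal.lintegral_mul_le_Lp_mul_Lq μ hconj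
    ((hf.pow_const t).aemeasurable) ((hg.pow_const (1 - t)).aemeasurable)
  simp only [Pi.mul_apply] at h
  calc ∫⁻ ω, f ω ^ t * g ω ^ (1 - t) ∂μ
      ≤ (∫⁻ ω, (f ω ^ t) ^ (1/t) ∂μ) ^ (1 / (1/t)) *
        (∫⁻ ω, (g ω ^ (1 - t)) ^ (1/(1-t)) ∂μ) ^ (1 / (1/(1-t))) := h
    _ = (∫⁻ ω, f ω ∂μ) ^ t * (∫⁻ ω, g ω ∂μ) ^ (1 - t) := by
        rw [one_div_one_div, one_div_one_div]
        congr 1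
        · congr 1
          refine lintegral_congr fun ω => ?_
          rw [← ENNReal.rpow_mul, mul_one_div, div_self ht.ne', ENNReal.rpow_one]
        · congr 1
          refine lintegral_congr fun ω => ?_
          rw [← ENNReal.rpow_mul, mul_one_div, div_self (by linarith : (1:ℝ) - t ≠ 0),
            ENNReal.rpow_one]

lemma renyi_aux {Ω : Type*} [MeasurableSpace Ω] (μ : Measure Ω) [SigmaFinite μ]
    (p q : Ω → ℝ≥0∞) (hp_meas : Measurable p) (hq_meas : Measurable q)
    (hp : ∫⁻ ω, p ω ∂μ = 1) (hq : ∫⁻ ω, q ω ∂μ = 1)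
    (s : ℝ) (hs0 : 0 < s) (hs2 : s < 1/2) :
    ENNReal.ofReal (2 * s) * renyi μ p q (1 / 2) ≤ renyi μ p q s ∧
    renyi μ p q s ≤ ENNReal.ofReal (2 * (1 - s)) * renyi μ p q (1 / 2) := by
  set A : ℝ≥0∞ := ∫⁻ ω, p ω ^ s * q ω ^ (1 - s) ∂μ with hA
  set B : ℝ≥0∞ := ∫⁻ ω, p ω ^ (1/2 : ℝ) * q ω ^ (1 - 1/2 : ℝ) ∂μ with hB
  have hhalf : (1 : ℝ) - 1/2 = 1/2 := by norm_num
  -- bounds by 1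
  have hA1 : A ≤ 1 := by
    have := hold μ p q hp_meas hq_meas hs0 (by linarith)
    rwa [hp, hq, ENNReal.one_rpow, ENNReal.one_rpow, one_mul] at this
  have hB1 : B ≤ 1 := by
    have := hold μ p q hp_meas hq_meas (by norm_num : (0:ℝ) < 1/2) (by norm_num)
    rwa [hp, hq, ENNReal.one_rpow, ENNReal.one_rpow, one_mul] at this
  have hAtop : A ≠ ⊤ := (lt_of_le_of_lt hA1 one_lt_top).ne
  have hBtop : B ≠ ⊤ := (lt_of_le_of_lt hB1 one_lt_top).ne
  -- A ≤ B ^ (2s)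
  have key1 : A ≤ B ^ (2 * s) := by
    have hm : Measurable fun ω => p ω ^ (1/2 : ℝ) * q ω ^ (1 - 1/2 : ℝ) :=
      (hp_meas.pow_const _).mul (hq_meas.pow_const _)
    have h := hold μ (fun ω => p ω ^ (1/2 : ℝ) * q ω ^ (1 - 1/2 : ℝ)) q hm hq_meas
      (by linarith : (0:ℝ) < 2 * s) (by linarith : 2 * s < 1)
    rw [hq, ENNReal.one_rpow, mul_one] at h
    refine le_trans (le_of_eq ?_) h
    refine lintegral_congr fun ω => ?_
    rw [hhalf, ENNReal.mul_rpow_of_nonneg _ _ (by linarith : (0:ℝ) ≤ 2 * s),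
      ← ENNReal.rpow_mul, ← ENNReal.rpow_mul, mul_assoc,
      ← ENNReal.rpow_add_of_nonneg _ _ (by linarith : (0:ℝ) ≤ 1/2 * (2*s))
        (by linarith : (0:ℝ) ≤ 1 - 2*s)]
    norm_num
    ring_nf
  -- B ≤ A ^ λ with λ = 1/(2(1-s))
  set l : ℝ := 1 / (2 * (1 - s)) with hl
  have hs1 : s < 1 := by linarith
  have hlpos : 0 < l := by
    rw [hl]; exact div_pos one_pos (by linarith)
  have hl1 : l < 1 := by
    rw [hl, div_lt_one (by linarith)]; linarith
  have he1 : (1 - s) * l = 1/2 := by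
    rw [hl, mul_one_div, div_eq_div_iff (by linarith) (by norm_num)]; ring
  have he2 : s * l + (1 - l) = 1/2 := by
    have h' : s * l - l = -((1 - s) * l) := by ring
    linarith [he1, h']
  have key2 : B ≤ A ^ l := by
    have hm : Measurable fun ω => p ω ^ s * q ω ^ (1 - s) :=
      (hp_meas.pow_const _).mul (hq_meas.pow_const _)
    have h := hold μ (fun ω => p ω ^ s * q ω ^ (1 - s)) p hm hp_meas hlpos hl1
    rw [hp, ENNReal.one_rpow, mul_one] at h
    refine le_trans (le_of_eq ?_) h
    refine lintegral_congr fun ω => ?_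
    rw [ENNReal.mul_rpow_of_nonneg _ _ hlpos.le, ← ENNReal.rpow_mul, ← ENNReal.rpow_mul,
      mul_right_comm,
      ← ENNReal.rpow_add_of_nonneg _ _ (by positivity : (0:ℝ) ≤ s * l) (by linarith : (0:ℝ) ≤ 1 - l),
      he2, he1, hhalf]
  constructor
  · -- lower bound
    have := negLog_antitone key1
    rwa [negLog_rpow B hBtop (by linarith : (0:ℝ) < 2*s)] at this
  · -- upper bound
    have h := negLog_antitone key2
    rw [negLog_rpow A hAtop hlpos] at h
    have h2 := mul_le_mul_of_nonneg_left h (zero_le : (0:ℝ≥0∞) ≤ ENNReal.ofReal (2 * (1 - s)))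
    rw [← mul_assoc, ← ENNReal.ofReal_mul (by linarith : (0:ℝ) ≤ 2 * (1-s))] at h2
    have : (2 * (1 - s)) * l = 1 := by
      rw [hl, mul_one_div, div_self (by linarith : 2 * (1 - s) ≠ 0)]
    rwa [this, ENNReal.ofReal_one, one_mul] at h2

lemma renyi_swap {Ω : Type*} [MeasurableSpace Ω] (μ : Measure Ω)
    (p q : Ω → ℝ≥0∞) (s : ℝ) : renyi μ p q s = renyi μ q p (1 - s) := by
  unfold renyi
  congr 1
  refine lintegral_congr fun ω => ?_
  have hss : (1:ℝ) - (1 - s) = s := by ring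
  rw [hss, mul_comm]

theorem stmt9 {Ω : Type*} [MeasurableSpace Ω] (μ : Measure Ω) [SigmaFinite μ]
    (p q : Ω → ℝ≥0∞) (hp_meas : Measurable p) (hq_meas : Measurable q)
    (hp : ∫⁻ ω, p ω ∂μ = 1) (hq : ∫⁻ ω, q ω ∂μ = 1)
    (s : ℝ) (hs : s ∈ Ioo (0 : ℝ) 1) :
    ENNReal.ofReal (2 * min s (1 - s)) * renyi μ p q (1 / 2) ≤ renyi μ p q s ∧
    renyi μ p q s ≤ ENNReal.ofReal (2 * max s (1 - s)) * renyi μ p q (1 / 2) := by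
  obtain ⟨hs0, hs1⟩ := hs
  rcases lt_trichotomy s (1/2) with h | h | h
  · rw [min_eq_left (by linarith), max_eq_right (by linarith)]
    exact renyi_aux μ p q hp_meas hq_meas hp hq s hs0 h
  · subst h
    simp only [show (1:ℝ) - 1/2 = 1/2 by norm_num, min_self, max_self]
    norm_num
  · rw [min_eq_right (by linarith), max_eq_left (by linarith)]
    have h1 := renyi_aux μ q p hq_meas hp_meas hq hp (1 - s) (by linarith) (by linarith)
    have e1 : renyi μ p q s = renyi μ q p (1 - s) := renyi_swap μ p q s
    have e2 : renyi μ p q (1/2) = renyi μ q p (1/2) := by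
      rw [renyi_swap μ p q (1/2)]; norm_num
    rw [e1, e2]
    have : (1 : ℝ) - (1 - s) = s := by ring
    rw [this] at h1
    exact h1
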